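/- A finite simple graph G is edge-minimal 2-self-centered with disconnected complement if and only if G is a complete bipartite graph K_{k,ℓ} with k, ℓ ≥ 2. -/

import Mathlib

open SimpleGraph

variable {V : Type*}

/-- Eccentricity of a vertex: maximum distance to any vertex. -/
noncomputable def ecc (G : SimpleGraph V) [Fintype V] (v : V) : ℕ :=
  Finset.univ.sup fun u => G.dist v u

/-- Diameter: maximum eccentricity. -/
noncomputable def gdiam (G : SimpleGraph V) [Fintype V] : ℕ :=
  Finset.univ.sup fun v => ecc G v

/-- Radius: minimum eccentricity. -/
noncomputable def grad (G : SimpleGraph V) [Fintype V] : ℕ :=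
  sInf (Set.range fun v => ecc G v)

/-- A graph is 2-self-centered if it is connected and diam = rad = 2. -/
def TwoSC (G : SimpleGraph V) [Fintype V] : Prop :=
  G.Connected ∧ gdiam G = 2 ∧ grad G = 2

lemma twoSC_iff [Fintype V] (G : SimpleGraph V) :
    TwoSC G ↔ G.Connected ∧
      (∀ u v, u ≠ v → ¬ G.Adj u v → ∃ w, G.Adj u w ∧ G.Adj w v) ∧
      (∀ v, ∃ u, u ≠ v ∧ ¬ G.Adj v u) := by
  constructor
  · rintro ⟨hc, hd, hr⟩
    have hdle : ∀ u v, G.dist u v ≤ 2 := by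
      intro u v
      calc G.dist u v ≤ ecc G u := Finset.le_sup (Finset.mem_univ v)
        _ ≤ gdiam G := Finset.le_sup (Finset.mem_univ u)
        _ = 2 := hd
    refine ⟨hc, ?_, ?_⟩
    · intro u v hne hadj
      have h0 : G.dist u v ≠ 0 := fun h => hne (hc.dist_eq_zero_iff.mp h)
      have h1 : G.dist u v ≠ 1 := fun h => hadj (dist_eq_one_iff_adj.mp h)
      have h2 : G.dist u v = 2 := by have := hdle u v; omega
      obtain ⟨p, hp⟩ := (hc.preconnected u v).exists_walk_length_eq_dist
      rw [h2] at hp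
      refine ⟨p.getVert 1, ?_, ?_⟩
      · have := p.adj_getVert_succ (i := 0) (by omega)
        simpa using this
      · have := p.adj_getVert_succ (i := 1) (by omega)
        rw [show (1 : ℕ) + 1 = p.length from by omega] at this
        simpa using this
    · intro v
      have h2 : 2 ≤ ecc G v := by
        rw [← hr]; exact Nat.sInf_le ⟨v, rfl⟩
      by_contra hcon
      push_neg at hcon
      have : ecc G v ≤ 1 := by
        apply Finset.sup_le
        intro u _
        by_cases huv : u = v
        · subst huv; simp [SimpleGraph.dist_self]
        · rcases hcon u huv with hadj
          have := SimpleGraph.dist_le (hadj.toWalk)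
          simp at this; omega
      omega
  · rintro ⟨hc, hcn, hnn⟩
    have hne : Nonempty V := hc.nonempty
    have hdle : ∀ u v, G.dist u v ≤ 2 := by
      intro u v
      by_cases huv : u = v
      · subst huv; simp [SimpleGraph.dist_self]
      by_cases hadj : G.Adj u v
      · have := SimpleGraph.dist_le hadj.toWalk; simp at this; omega
      obtain ⟨w, h1, h2⟩ := hcn u v huv hadj
      have := SimpleGraph.dist_le (h1.toWalk.append h2.toWalk)
      simpa using this
    have hecc : ∀ v, ecc G v = 2 := by
      intro v
      apply le_antisymm
      · exact Finset.sup_le fun u _ => hdle v u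
      · obtain ⟨u, hu, hadj⟩ := hnn v
        have h0 : G.dist v u ≠ 0 := fun h => hu (hc.dist_eq_zero_iff.mp h).symm
        have h1 : G.dist v u ≠ 1 := fun h => hadj (dist_eq_one_iff_adj.mp h)
        calc 2 ≤ G.dist v u := by omega
          _ ≤ ecc G v := Finset.le_sup (Finset.mem_univ u)
    refine ⟨hc, ?_, ?_⟩
    · apply le_antisymm
      · exact Finset.sup_le fun v _ => (hecc v).le
      · obtain ⟨v⟩ := hne
        calc 2 = ecc G v := (hecc v).symm
          _ ≤ gdiam G := Finset.le_sup (Finset.mem_univ v)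
    · obtain ⟨v⟩ := hne
      apply le_antisymm
      · exact (Nat.sInf_le ⟨v, hecc v⟩)
      · apply le_csInf (Set.range_nonempty (h := ⟨v⟩) _)
        rintro b ⟨u, rfl⟩
        exact (hecc u).ge

def IsBip (G : SimpleGraph V) (A : Set V) : Prop :=
  ∀ u v, G.Adj u v ↔ (u ∈ A ∧ v ∉ A) ∨ (u ∉ A ∧ v ∈ A)

lemma bip_props [Fintype V] (G : SimpleGraph V) (A : Set V) (hA : IsBip G A)
    {a1 a2 b1 b2 : V} (ha1 : a1 ∈ A) (ha2 : a2 ∈ A) (ha : a1 ≠ a2)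
    (hb1 : b1 ∉ A) (hb2 : b2 ∉ A) (hb : b1 ≠ b2) :
    TwoSC G ∧ (∀ e ∈ G.edgeSet, ¬ TwoSC (G.deleteEdges {e})) ∧ ¬ Gᶜ.Connected := by
  have cross : ∀ {u v}, u ∈ A → v ∉ A → G.Adj u v := fun hu hv => (hA _ _).mpr (Or.inl ⟨hu, hv⟩)
  have sameA : ∀ {u v}, u ∈ A → v ∈ A → ¬ G.Adj u v := by
    intro u v hu hv h
    rcases (hA u v).mp h with ⟨_, h2⟩ | ⟨h1, _⟩ <;> tauto
  have sameB : ∀ {u v}, u ∉ A → v ∉ A → ¬ G.Adj u v := by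
    intro u v hu hv h
    rcases (hA u v).mp h with ⟨h1, _⟩ | ⟨_, h2⟩ <;> tauto
  refine ⟨?_, ?_, ?_⟩
  · rw [twoSC_iff]
    refine ⟨(connected_iff G).mpr ⟨?_, ⟨a1⟩⟩, fun u v hne hadj => ?_, fun v => ?_⟩
    · intro u v
      by_cases hu : u ∈ A <;> by_cases hv : v ∈ A
      · exact (cross hu hb1).reachable.trans (cross hv hb1).reachable.symm
      · exact (cross hu hv).reachable
      · exact ((cross hv hu).reachable).symm
      · exact ((cross ha1 hu).reachable).symm.trans (cross ha1 hv).reachable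

    · by_cases hu : u ∈ A <;> by_cases hv : v ∈ A
      · exact ⟨b1, cross hu hb1, (cross hv hb1).symm⟩
      · exact absurd (cross hu hv) hadj
      · exact absurd ((cross hv hu).symm) hadj
      · exact ⟨a1, (cross ha1 hu).symm, cross ha1 hv⟩
    · by_cases hv : v ∈ A
      · by_cases h : v = a1
        · exact ⟨a2, by rw [h]; exact ha.symm, fun hadj => sameA hv ha2 hadj⟩
        · exact ⟨a1, fun hh => h hh.symm, fun hadj => sameA hv ha1 hadj⟩
      · by_cases h : v = b1
        · exact ⟨b2, by rw [h]; exact hb.symm, fun hadj => sameB hv hb2 hadj⟩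
        · exact ⟨b1, fun hh => h hh.symm, fun hadj => sameB hv hb1 hadj⟩
  · intro e he
    induction e using Sym2.ind with
    | _ x y =>
    rw [mem_edgeSet] at he
    intro hT
    obtain ⟨_, hcn, _⟩ := (twoSC_iff _).mp hT
    have hnadj : ¬ (G.deleteEdges {s(x,y)}).Adj x y := by
      simp [deleteEdges_adj]
    obtain ⟨w, hw1, hw2⟩ := hcn x y he.ne hnadj
    rw [deleteEdges_adj] at hw1 hw2
    rcases (hA x y).mp he with ⟨hx, hy⟩ | ⟨hx, hy⟩
    · rcases (hA x w).mp hw1.1 with ⟨_, hw⟩ | ⟨h1, _⟩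
      · rcases (hA w y).mp hw2.1 with ⟨hw', _⟩ | ⟨_, h2⟩ <;> tauto
      · tauto
    · rcases (hA x w).mp hw1.1 with ⟨h1, _⟩ | ⟨_, hw⟩
      · tauto
      · rcases (hA w y).mp hw2.1 with ⟨_, h2⟩ | ⟨hw', _⟩ <;> tauto
  · intro hc
    have key : ∀ {x y : V} (_ : Gᶜ.Walk x y), x ∈ A → y ∈ A := by
      intro x y p
      induction p with
      | nil => exact id
      | @cons x' z y' h p ih =>
        intro hx
        rcases (compl_adj _ _ _).mp h with ⟨hne, hnadj⟩
        by_cases hz : z ∈ A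
        · exact ih hz
        · exact absurd (cross hx hz) hnadj
    obtain ⟨p⟩ := hc.preconnected a1 b1
    exact hb1 (key p ha1)

lemma bip_of_props [Fintype V] (G : SimpleGraph V)
    (hT : TwoSC G) (hmin : ∀ e ∈ G.edgeSet, ¬ TwoSC (G.deleteEdges {e}))
    (hcompl : ¬ Gᶜ.Connected) :
    ∃ A : Set V, IsBip G A ∧ (∃ a1 a2, a1 ∈ A ∧ a2 ∈ A ∧ a1 ≠ a2) ∧
      (∃ b1 b2, b1 ∉ A ∧ b2 ∉ A ∧ b1 ≠ b2) := by
  obtain ⟨hc, hcn, hnn⟩ := (twoSC_iff G).mp hT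
  have hV : Nonempty V := hc.nonempty
  have : ¬ Gᶜ.Preconnected := fun h => hcompl ((connected_iff _).mpr ⟨h, hV⟩)
  rw [Preconnected] at this
  push_neg at this
  obtain ⟨a, b, hab⟩ := this
  set A : Set V := {x | Gᶜ.Reachable a x} with hAdef
  have ha : a ∈ A := Reachable.refl a
  have hbA : b ∉ A := hab
  have cross : ∀ {x y}, x ∈ A → y ∉ A → G.Adj x y := by
    intro x y hx hy
    by_contra hadj
    have hne : x ≠ y := fun h => hy (h ▸ hx)
    exact hy (hx.trans ((compl_adj _ _ _).mpr ⟨hne, hadj⟩).reachable)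
  have no_intra : ∀ x y, G.Adj x y → ((x ∈ A) ↔ (y ∈ A)) → False := by
    intro x y hxy hside
    apply hmin s(x,y) ((mem_edgeSet G).mpr hxy)
    set G' := G.deleteEdges {s(x,y)} with hG'
    have survive : ∀ {u v}, u ∈ A → v ∉ A → G'.Adj u v := by
      intro u v hu hv
      rw [hG', deleteEdges_adj]
      refine ⟨cross hu hv, ?_⟩
      simp only [Set.mem_singleton_iff, Sym2.eq_iff]
      rintro (⟨rfl, rfl⟩ | ⟨rfl, rfl⟩) <;> tauto
    rw [twoSC_iff]
    refine ⟨(connected_iff G').mpr ⟨?_, hV⟩, fun u v hne hadj => ?_, fun v => ?_⟩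
    · intro u v
      by_cases hu : u ∈ A <;> by_cases hv : v ∈ A
      · exact (survive hu hbA).reachable.trans (survive hv hbA).reachable.symm
      · exact (survive hu hv).reachable
      · exact ((survive hv hu).reachable).symm
      · exact ((survive ha hu).reachable).symm.trans (survive ha hv).reachable
    · by_cases hu : u ∈ A <;> by_cases hv : v ∈ A
      · exact ⟨b, survive hu hbA, (survive hv hbA).symm⟩
      · exact absurd (survive hu hv) hadj
      · exact absurd ((survive hv hu).symm) hadj
      · exact ⟨a, (survive ha hu).symm, survive ha hv⟩
    · obtain ⟨u, hu, hadj⟩ := hnn v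
      exact ⟨u, hu, fun h => hadj (deleteEdges_adj.mp h).1⟩
  have hbip : IsBip G A := by
    intro u v
    constructor
    · intro h
      by_cases hu : u ∈ A <;> by_cases hv : v ∈ A
      · exact absurd (iff_of_true hu hv) (fun hh => no_intra u v h hh)
      · exact Or.inl ⟨hu, hv⟩
      · exact Or.inr ⟨hu, hv⟩
      · exact absurd (iff_of_false hu hv) (fun hh => no_intra u v h hh)
    · rintro (⟨hu, hv⟩ | ⟨hu, hv⟩)
      · exact cross hu hv
      · exact (cross hv hu).symm
  refine ⟨A, hbip, ?_, ?_⟩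
  · obtain ⟨u, hu, hadj⟩ := hnn a
    refine ⟨a, u, ha, ?_, fun h => hu h.symm⟩
    by_contra huA
    exact hadj (cross ha huA)
  · obtain ⟨u, hu, hadj⟩ := hnn b
    refine ⟨b, u, hbA, ?_, fun h => hu h.symm⟩
    intro huA
    exact hadj ((cross huA hbA).symm)


/-- G is edge-minimal 2-self-centered with disconnected complement iff G is a complete
bipartite graph K_{k,ℓ} with k, ℓ ≥ 2. -/
theorem stmt_6 [Fintype V] (G : SimpleGraph V) :
    (TwoSC G ∧ (∀ e ∈ G.edgeSet, ¬ TwoSC (G.deleteEdges {e})) ∧ ¬ Gᶜ.Connected) ↔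
      ∃ k ℓ : ℕ, 2 ≤ k ∧ 2 ≤ ℓ ∧
        Nonempty (G ≃g completeBipartiteGraph (Fin k) (Fin ℓ)) := by
  classical
  constructor
  · rintro ⟨hT, hmin, hcompl⟩
    obtain ⟨A, hbip, ⟨a1, a2, ha1, ha2, ha⟩, ⟨b1, b2, hb1, hb2, hb⟩⟩ :=
      bip_of_props G hT hmin hcompl
    set k := Fintype.card {x // x ∈ A} with hk
    set l := Fintype.card {x // ¬ x ∈ A} with hl
    have hk2 : 2 ≤ k := Fintype.one_lt_card_iff.mpr
      ⟨⟨a1, ha1⟩, ⟨a2, ha2⟩, fun h => ha (congrArg Subtype.val h)⟩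
    have hl2 : 2 ≤ l := Fintype.one_lt_card_iff.mpr
      ⟨⟨b1, hb1⟩, ⟨b2, hb2⟩, fun h => hb (congrArg Subtype.val h)⟩
    set f : V ≃ Fin k ⊕ Fin l :=
      (Equiv.sumCompl (· ∈ A)).symm.trans
        (Equiv.sumCongr (Fintype.equivFin _) (Fintype.equivFin _)) with hf
    refine ⟨k, l, hk2, hl2, ⟨⟨f, ?_⟩⟩⟩
    intro u v
    have key : ∀ w : V, (w ∈ A → ∃ i, f w = Sum.inl i) ∧ (w ∉ A → ∃ i, f w = Sum.inr i) := by
      intro w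
      constructor
      · intro hw
        exact ⟨Fintype.equivFin _ ⟨w, hw⟩, by simp [hf, Equiv.sumCompl_symm_apply_of_pos hw]⟩
      · intro hw
        exact ⟨Fintype.equivFin _ ⟨w, hw⟩, by simp [hf, Equiv.sumCompl_symm_apply_of_neg hw]⟩
    show (completeBipartiteGraph _ _).Adj (f u) (f v) ↔ G.Adj u v
    rw [hbip u v]
    by_cases hu : u ∈ A <;> by_cases hv : v ∈ A
    · obtain ⟨i, hi⟩ := (key u).1 hu; obtain ⟨j, hj⟩ := (key v).1 hv
      simp [hi, hj, hu, hv]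
    · obtain ⟨i, hi⟩ := (key u).1 hu; obtain ⟨j, hj⟩ := (key v).2 hv
      simp [hi, hj, hu, hv]
    · obtain ⟨i, hi⟩ := (key u).2 hu; obtain ⟨j, hj⟩ := (key v).1 hv
      simp [hi, hj, hu, hv]
    · obtain ⟨i, hi⟩ := (key u).2 hu; obtain ⟨j, hj⟩ := (key v).2 hv
      simp [hi, hj, hu, hv]
  · rintro ⟨k, l, hk, hl, ⟨e⟩⟩
    set A : Set V := {v | (e v).isLeft} with hA
    have hbip : IsBip G A := by
      intro u v
      rw [← e.map_adj_iff]
      have hmu : u ∈ A ↔ (e u).isLeft := Iff.rfl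
      have hmv : v ∈ A ↔ (e v).isLeft := Iff.rfl
      rcases hu : e u with x | x <;> rcases hv : e v with y | y <;>
        simp [hmu, hmv, hu, hv]
    have happ : ∀ s, e (e.symm s) = s := fun s => e.apply_symm_apply s
    refine (bip_props G A hbip (a1 := e.symm (Sum.inl ⟨0, by omega⟩))
      (a2 := e.symm (Sum.inl ⟨1, by omega⟩))
      (b1 := e.symm (Sum.inr ⟨0, by omega⟩))
      (b2 := e.symm (Sum.inr ⟨1, by omega⟩)) ?_ ?_ ?_ ?_ ?_ ?_)
    · show (e _).isLeft; rw [happ]; rfl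
    · show (e _).isLeft; rw [happ]; rfl
    · intro h
      have := congrArg e h
      rw [happ, happ] at this
      simpa using this
    · show ¬ (e _).isLeft = true; rw [happ]; simp
    · show ¬ (e _).isLeft = true; rw [happ]; simp
    · intro h
      have := congrArg e h
      rw [happ, happ] at this
      simpa using this
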